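/- For all t ≥ 0, f'(t)² = 1 − f(t)^(−α). (First integral of the Sha–Yang ODE, obtained by integrating 2·f'·f'' = α·f^(−α−1)·f'.) -/

import Mathlib

/-- First integral of the Sha–Yang ODE: for all `t ≥ 0`,
`f'(t)² = 1 − f(t)^(−α)`. -/
theorem shaYang_first_integral (α : ℝ) (hα : 0 < α) (f : ℝ → ℝ)
    (hf : ContDiff ℝ 2 f) (hf0 : f 0 = 1) (hf'0 : deriv f 0 = 0)
    (hfpos : ∀ t ≥ (0 : ℝ), 0 < f t)
    (hode : ∀ t ≥ (0 : ℝ), deriv (deriv f) t = (α / 2) * (f t) ^ (-α - 1)) :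
    ∀ t ≥ (0 : ℝ), (deriv f t) ^ 2 = 1 - (f t) ^ (-α) := by
  intro t ht
  set g : ℝ → ℝ := fun s => (deriv f s) ^ 2 + (f s) ^ (-α) with hg
  have hfd : Differentiable ℝ f := hf.differentiable (by norm_num)
  have hf'd : Differentiable ℝ (deriv f) := by
    have h2 : ContDiff ℝ ((1 : ℕ∞) + 1) f := by
      exact_mod_cast hf
    exact ((contDiff_succ_iff_deriv.mp h2).2.2).differentiable (by norm_num)
  have key : ∀ x ≥ (0 : ℝ), HasDerivAt g 0 x := by
    intro x hx
    have h1 : HasDerivAt (fun s => (deriv f s) ^ 2)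
        ((2 : ℕ) * (deriv f x) ^ (2 - 1) * deriv (deriv f) x) x :=
      (hf'd x).hasDerivAt.pow 2
    have h2 : HasDerivAt (fun s => (f s) ^ (-α))
        (deriv f x * (-α) * (f x) ^ (-α - 1)) x :=
      (hfd x).hasDerivAt.rpow_const (Or.inl (ne_of_gt (hfpos x hx)))
    have hsum := h1.add h2
    have hval : (2 : ℕ) * (deriv f x) ^ (2 - 1) * deriv (deriv f) x
        + deriv f x * (-α) * (f x) ^ (-α - 1) = 0 := by
      rw [hode x hx]; push_cast; ring
    rw [hval] at hsum
    exact hsum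
  have hcont : ContinuousOn g (Set.Icc 0 t) := fun x hx =>
    ((key x hx.1).continuousAt).continuousWithinAt
  have hgt : g t = g 0 :=
    constant_of_has_deriv_right_zero hcont
      (fun x hx => (key x hx.1).hasDerivWithinAt) t (Set.right_mem_Icc.mpr ht)
  have hg0 : g 0 = 1 := by simp [hg, hf'0, hf0, Real.one_rpow]
  have : (deriv f t) ^ 2 + (f t) ^ (-α) = 1 := by rw [← hg0, ← hgt]
  linarith
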